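/- Let M be a 2×2 complex matrix of the form [[a, conj(b)], [b, conj(a)]]. Then the operator norm of M equals the supremum over θ ∈ ℝ of ‖M ẽ_θ‖, where ẽ_θ = (1/√2)(e^{iθ}, e^{-iθ})ᵗ. -/

import Mathlib

open Complex

/-- For `M = [[a, conj b],[b, conj a]]`, the operator norm of `M` on
Euclidean `ℂ²` equals `sup_{θ ∈ ℝ} ‖M ẽ_θ‖` with `ẽ_θ = (1/√2)(e^{iθ}, e^{-iθ})ᵗ`. -/
theorem stmt1 (a b : ℂ) :
    ‖LinearMap.toContinuousLinearMap
        (Matrix.toEuclideanLin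
          (Matrix.of ![![a, (starRingEnd ℂ) b], ![b, (starRingEnd ℂ) a]]))‖
      = ⨆ θ : ℝ,
          ‖LinearMap.toContinuousLinearMap
              (Matrix.toEuclideanLin
                (Matrix.of ![![a, (starRingEnd ℂ) b], ![b, (starRingEnd ℂ) a]]))
            ((WithLp.equiv 2 (Fin 2 → ℂ)).symm
              ![(1 / Real.sqrt 2 : ℝ) * Complex.exp (θ * Complex.I),
                (1 / Real.sqrt 2 : ℝ) * Complex.exp (-θ * Complex.I)])‖ := by
  set T := LinearMap.toContinuousLinearMap
        (Matrix.toEuclideanLin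
          (Matrix.of ![![a, (starRingEnd ℂ) b], ![b, (starRingEnd ℂ) a]])) with hTdef
  -- action on explicit vectors
  have happ : ∀ x y : ℂ, T ((WithLp.equiv 2 (Fin 2 → ℂ)).symm ![x, y])
      = (WithLp.equiv 2 (Fin 2 → ℂ)).symm
          ![a * x + (starRingEnd ℂ) b * y, b * x + (starRingEnd ℂ) a * y] := by
    intro x y
    rw [hTdef, LinearMap.coe_toContinuousLinearMap',
      WithLp.equiv_symm_apply, Matrix.toEuclideanLin_apply_piLp_toLp]
    congr 1
    funext i
    fin_cases i <;> simp [Matrix.mulVec, dotProduct, Fin.sum_univ_two]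
  have hnorm : ∀ x y : ℂ, ‖(WithLp.equiv 2 (Fin 2 → ℂ)).symm ![x, y]‖
      = Real.sqrt (‖x‖ ^ 2 + ‖y‖ ^ 2) := by
    intro x y
    rw [EuclideanSpace.norm_eq]
    simp [Fin.sum_univ_two]
  have hsqrt2 : (0:ℝ) < Real.sqrt 2 := Real.sqrt_pos.2 (by norm_num)
  -- norm of exp(θ I)
  have hexp : ∀ t : ℝ, ‖Complex.exp ((t:ℂ) * Complex.I)‖ = 1 := by
    intro t
    simp [Complex.norm_exp]
  -- unit vectors
  have hunit : ∀ θ : ℝ, ‖(WithLp.equiv 2 (Fin 2 → ℂ)).symm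
      ![((1 / Real.sqrt 2 : ℝ) : ℂ) * Complex.exp (θ * Complex.I),
        ((1 / Real.sqrt 2 : ℝ) : ℂ) * Complex.exp (-θ * Complex.I)]‖ = 1 := by
    intro θ
    rw [hnorm]
    have h1 : ‖((1 / Real.sqrt 2 : ℝ) : ℂ) * Complex.exp ((θ:ℂ) * Complex.I)‖
        = 1 / Real.sqrt 2 := by
      rw [norm_mul, hexp θ, Complex.norm_real]
      simp [abs_of_pos, hsqrt2]
    have h2 : ‖((1 / Real.sqrt 2 : ℝ) : ℂ) * Complex.exp (-(θ:ℂ) * Complex.I)‖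
        = 1 / Real.sqrt 2 := by
      have := hexp (-θ)
      push_cast at this
      rw [norm_mul, this, Complex.norm_real]
      simp [abs_of_pos, hsqrt2]
    rw [h1, h2]
    have : (1 / Real.sqrt 2) ^ 2 + (1 / Real.sqrt 2) ^ 2 = 1 := by
      rw [div_pow, one_pow, Real.sq_sqrt (by norm_num : (0:ℝ) ≤ 2)]
      norm_num
    rw [this, Real.sqrt_one]
  -- value of g θ
  have hg : ∀ θ : ℝ, ‖T ((WithLp.equiv 2 (Fin 2 → ℂ)).symm
      ![((1 / Real.sqrt 2 : ℝ) : ℂ) * Complex.exp (θ * Complex.I),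
        ((1 / Real.sqrt 2 : ℝ) : ℂ) * Complex.exp (-θ * Complex.I)])‖
      = ‖a * Complex.exp ((θ:ℂ) * Complex.I)
          + (starRingEnd ℂ) b * Complex.exp (-(θ:ℂ) * Complex.I)‖ := by
    intro θ
    rw [happ, hnorm]
    set u := a * Complex.exp ((θ:ℂ) * Complex.I)
          + (starRingEnd ℂ) b * Complex.exp (-(θ:ℂ) * Complex.I) with hu
    have e1 : a * (((1 / Real.sqrt 2 : ℝ) : ℂ) * Complex.exp ((θ:ℂ) * Complex.I))
        + (starRingEnd ℂ) b * (((1 / Real.sqrt 2 : ℝ) : ℂ) * Complex.exp (-(θ:ℂ) * Complex.I))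
        = ((1 / Real.sqrt 2 : ℝ) : ℂ) * u := by rw [hu]; ring
    have e2 : b * (((1 / Real.sqrt 2 : ℝ) : ℂ) * Complex.exp ((θ:ℂ) * Complex.I))
        + (starRingEnd ℂ) a * (((1 / Real.sqrt 2 : ℝ) : ℂ) * Complex.exp (-(θ:ℂ) * Complex.I))
        = ((1 / Real.sqrt 2 : ℝ) : ℂ) * (starRingEnd ℂ) u := by
      rw [hu]
      simp only [map_add, map_mul, ← Complex.exp_conj, Complex.conj_conj]
      simp only [map_mul, Complex.conj_I, Complex.conj_ofReal, map_neg]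
      ring
    rw [e1, e2]
    have hnu : ‖((1 / Real.sqrt 2 : ℝ) : ℂ) * u‖ = (1 / Real.sqrt 2) * ‖u‖ := by
      rw [norm_mul, Complex.norm_real]
      simp [abs_of_pos, hsqrt2]
    have hnu' : ‖((1 / Real.sqrt 2 : ℝ) : ℂ) * (starRingEnd ℂ) u‖
        = (1 / Real.sqrt 2) * ‖u‖ := by
      rw [norm_mul, Complex.norm_real, RCLike.norm_conj]
      simp [abs_of_pos, hsqrt2]
    rw [hnu, hnu']
    have : (1 / Real.sqrt 2 * ‖u‖) ^ 2 + (1 / Real.sqrt 2 * ‖u‖) ^ 2 = ‖u‖ ^ 2 := by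
      rw [mul_pow, div_pow, one_pow, Real.sq_sqrt (by norm_num : (0:ℝ) ≤ 2)]
      ring
    rw [this, Real.sqrt_sq (norm_nonneg u)]
  -- operator norm bound
  have hbound : ‖T‖ ≤ ‖a‖ + ‖b‖ := by
    apply ContinuousLinearMap.opNorm_le_bound
    · positivity
    intro v
    have hv : v = (WithLp.equiv 2 (Fin 2 → ℂ)).symm ![v 0, v 1] := by
      ext i
      fin_cases i <;> rfl
    rw [hv, happ, hnorm, hnorm]
    set x := v 0
    set y := v 1
    have h1 : ‖a * x + (starRingEnd ℂ) b * y‖ ≤ ‖a‖ * ‖x‖ + ‖b‖ * ‖y‖ := by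
      calc ‖a * x + (starRingEnd ℂ) b * y‖ ≤ ‖a * x‖ + ‖(starRingEnd ℂ) b * y‖ :=
            norm_add_le _ _
        _ = ‖a‖ * ‖x‖ + ‖b‖ * ‖y‖ := by rw [norm_mul, norm_mul, RCLike.norm_conj]
    have h2 : ‖b * x + (starRingEnd ℂ) a * y‖ ≤ ‖b‖ * ‖x‖ + ‖a‖ * ‖y‖ := by
      calc ‖b * x + (starRingEnd ℂ) a * y‖ ≤ ‖b * x‖ + ‖(starRingEnd ℂ) a * y‖ :=
            norm_add_le _ _
        _ = ‖b‖ * ‖x‖ + ‖a‖ * ‖y‖ := by rw [norm_mul, norm_mul, RCLike.norm_conj]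
    have hca : ‖a‖ = ‖a‖ := rfl
    have hcb : ‖b‖ = ‖b‖ := rfl
    rw [hca, hcb]
    have key : (‖a‖ + ‖b‖) * Real.sqrt (‖x‖ ^ 2 + ‖y‖ ^ 2)
        = Real.sqrt ((‖a‖ + ‖b‖) ^ 2 * (‖x‖ ^ 2 + ‖y‖ ^ 2)) := by
      rw [Real.sqrt_mul (sq_nonneg _), Real.sqrt_sq (by positivity)]
    rw [key]
    apply Real.sqrt_le_sqrt
    have h1sq : ‖a * x + (starRingEnd ℂ) b * y‖ ^ 2 ≤ (‖a‖ * ‖x‖ + ‖b‖ * ‖y‖) ^ 2 :=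
      pow_le_pow_left₀ (norm_nonneg _) h1 2
    have h2sq : ‖b * x + (starRingEnd ℂ) a * y‖ ^ 2 ≤ (‖b‖ * ‖x‖ + ‖a‖ * ‖y‖) ^ 2 :=
      pow_le_pow_left₀ (norm_nonneg _) h2 2
    nlinarith [h1sq, h2sq,
      mul_nonneg (mul_nonneg (norm_nonneg a) (norm_nonneg b)) (sq_nonneg (‖x‖ - ‖y‖))]
  -- each g θ ≤ ‖T‖
  have hle : ∀ θ : ℝ, ‖T ((WithLp.equiv 2 (Fin 2 → ℂ)).symm
      ![((1 / Real.sqrt 2 : ℝ) : ℂ) * Complex.exp (θ * Complex.I),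
        ((1 / Real.sqrt 2 : ℝ) : ℂ) * Complex.exp (-θ * Complex.I)])‖ ≤ ‖T‖ := by
    intro θ
    calc ‖T _‖ ≤ ‖T‖ * ‖(WithLp.equiv 2 (Fin 2 → ℂ)).symm
          ![((1 / Real.sqrt 2 : ℝ) : ℂ) * Complex.exp (θ * Complex.I),
            ((1 / Real.sqrt 2 : ℝ) : ℂ) * Complex.exp (-θ * Complex.I)]‖ :=
          T.le_opNorm _
      _ = ‖T‖ := by rw [hunit θ, mul_one]
  have hbdd : BddAbove (Set.range fun θ : ℝ => ‖T ((WithLp.equiv 2 (Fin 2 → ℂ)).symm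
      ![((1 / Real.sqrt 2 : ℝ) : ℂ) * Complex.exp (θ * Complex.I),
        ((1 / Real.sqrt 2 : ℝ) : ℂ) * Complex.exp (-θ * Complex.I)])‖) := by
    refine ⟨‖T‖, ?_⟩
    rintro r ⟨θ, rfl⟩
    exact hle θ
  -- the maximizing angle
  set θ₀ : ℝ := -(a.arg + b.arg) / 2 with hθ₀
  have hmax : ‖a * Complex.exp ((θ₀:ℂ) * Complex.I)
      + (starRingEnd ℂ) b * Complex.exp (-(θ₀:ℂ) * Complex.I)‖
      = ‖a‖ + ‖b‖ := by
    have ha' : a * Complex.exp (-(a.arg:ℂ) * Complex.I) = (‖a‖ : ℂ) := by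
      conv_lhs => lhs; rw [← Complex.norm_mul_exp_arg_mul_I a]
      rw [mul_assoc, ← Complex.exp_add,
        show ((a.arg:ℂ)) * Complex.I + -(a.arg:ℂ) * Complex.I = 0 from by ring,
        Complex.exp_zero, mul_one]
    have hb' : (starRingEnd ℂ) b * Complex.exp ((b.arg:ℂ) * Complex.I)
        = (‖b‖ : ℂ) := by
      have : b * Complex.exp (-(b.arg:ℂ) * Complex.I) = (‖b‖ : ℂ) := by
        conv_lhs => lhs; rw [← Complex.norm_mul_exp_arg_mul_I b]
        rw [mul_assoc, ← Complex.exp_add,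
          show ((b.arg:ℂ)) * Complex.I + -(b.arg:ℂ) * Complex.I = 0 from by ring,
          Complex.exp_zero, mul_one]
      have := congrArg (starRingEnd ℂ) this
      simpa [map_mul, ← Complex.exp_conj, Complex.conj_I, Complex.conj_ofReal] using this
    have hmul : (a * Complex.exp ((θ₀:ℂ) * Complex.I)
        + (starRingEnd ℂ) b * Complex.exp (-(θ₀:ℂ) * Complex.I))
        * Complex.exp (((θ₀ + b.arg : ℝ):ℂ) * Complex.I)
        = (‖a‖ + ‖b‖ : ℂ) := by
      have e1 : Complex.exp ((θ₀:ℂ) * Complex.I)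
          * Complex.exp (((θ₀ + b.arg : ℝ):ℂ) * Complex.I)
          = Complex.exp (-(a.arg:ℂ) * Complex.I) := by
        rw [← Complex.exp_add]
        congr 1
        push_cast
        rw [hθ₀]
        push_cast
        ring
      have e2 : Complex.exp (-(θ₀:ℂ) * Complex.I)
          * Complex.exp (((θ₀ + b.arg : ℝ):ℂ) * Complex.I)
          = Complex.exp ((b.arg:ℂ) * Complex.I) := by
        rw [← Complex.exp_add]
        congr 1
        push_cast
        ring
      calc (a * Complex.exp ((θ₀:ℂ) * Complex.I)
            + (starRingEnd ℂ) b * Complex.exp (-(θ₀:ℂ) * Complex.I))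
            * Complex.exp (((θ₀ + b.arg : ℝ):ℂ) * Complex.I)
          = a * (Complex.exp ((θ₀:ℂ) * Complex.I)
              * Complex.exp (((θ₀ + b.arg : ℝ):ℂ) * Complex.I))
            + (starRingEnd ℂ) b * (Complex.exp (-(θ₀:ℂ) * Complex.I)
              * Complex.exp (((θ₀ + b.arg : ℝ):ℂ) * Complex.I)) := by ring
        _ = a * Complex.exp (-(a.arg:ℂ) * Complex.I)
            + (starRingEnd ℂ) b * Complex.exp ((b.arg:ℂ) * Complex.I) := by rw [e1, e2]
        _ = (‖a‖ + ‖b‖ : ℂ) := by rw [ha', hb']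
    have := congrArg norm hmul
    rw [norm_mul, hexp (θ₀ + b.arg), mul_one] at this
    rw [this, ← Complex.ofReal_add, Complex.norm_real]
    exact abs_of_nonneg (by positivity)
  -- conclude
  apply le_antisymm
  · calc ‖T‖ ≤ ‖a‖ + ‖b‖ := hbound
      _ = ‖T ((WithLp.equiv 2 (Fin 2 → ℂ)).symm
          ![((1 / Real.sqrt 2 : ℝ) : ℂ) * Complex.exp (θ₀ * Complex.I),
            ((1 / Real.sqrt 2 : ℝ) : ℂ) * Complex.exp (-θ₀ * Complex.I)])‖ := by
          rw [hg θ₀, hmax]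
      _ ≤ ⨆ θ : ℝ, ‖T ((WithLp.equiv 2 (Fin 2 → ℂ)).symm
          ![((1 / Real.sqrt 2 : ℝ) : ℂ) * Complex.exp (θ * Complex.I),
            ((1 / Real.sqrt 2 : ℝ) : ℂ) * Complex.exp (-θ * Complex.I)])‖ :=
          le_ciSup hbdd θ₀
  · exact ciSup_le hle
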